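/- Let k ≥ 2 and A ⊆ ℕ with r_{1,k}(A,n) = r_{1,k}(ℕ∖A,n) for all sufficiently large n. Then r_{1,k}(A,n) → ∞ as n → ∞. -/

import Mathlib

noncomputable def weightedRep (A : Set ℕ) (k n : ℕ) : ℕ :=
  {p : ℕ × ℕ | p.1 ∈ A ∧ p.2 ∈ A ∧ n = p.1 + k * p.2}.ncard

open Finset in
open scoped Classical in
lemma wr_eq (A : Set ℕ) (k n : ℕ) (hk : 1 ≤ k) :
    weightedRep A k n
      = ((range (n/k+1)).filter (fun y => (n - k*y) ∈ A ∧ y ∈ A)).card := by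
  have himg : {p : ℕ × ℕ | p.1 ∈ A ∧ p.2 ∈ A ∧ n = p.1 + k * p.2}
      = ↑(((range (n/k+1)).filter (fun y => (n - k*y) ∈ A ∧ y ∈ A)).image
          (fun y => (n - k*y, y))) := by
    ext ⟨a, b⟩
    simp only [Set.mem_setOf_eq, coe_image, Set.mem_image, mem_coe, mem_filter, mem_range]
    constructor
    · rintro ⟨ha, hb, hn⟩
      refine ⟨b, ⟨?_, ?_, hb⟩, ?_⟩
      · have : b * k ≤ n := by nlinarith [hn]
        have := Nat.le_div_iff_mul_le (by omega : 0 < k) |>.2 this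
        omega
      · have : n - k * b = a := by omega
        rwa [this]
      · have : n - k * b = a := by omega
        simp [this]
    · rintro ⟨y, ⟨hy, hx, hyA⟩, heq⟩
      have hky : k * y ≤ n := by
        have h1 : y ≤ n / k := by omega
        calc k * y ≤ k * (n / k) := Nat.mul_le_mul_left _ h1
        _ ≤ n := Nat.mul_div_le n k
      obtain ⟨rfl, rfl⟩ : n - k * y = a ∧ y = b := by
        constructor <;> [exact congrArg Prod.fst heq; exact congrArg Prod.snd heq]
      exact ⟨hx, hyA, by omega⟩
  rw [weightedRep, himg, Set.ncard_coe_finset]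
  exact Finset.card_image_of_injective _ (fun y z h => congrArg Prod.snd h)

open Finset in
open scoped Classical in
lemma count_eq (A : Set ℕ) (k n : ℕ) (hk : 1 ≤ k)
    (h : weightedRep A k n = weightedRep Aᶜ k n) :
    ((range (n/k+1)).filter (fun y => (n - k*y) ∈ A)).card
      + ((range (n/k+1)).filter (fun y => y ∈ A)).card
      = n/k + 1 := by
  set R := range (n/k+1) with hR
  have hc : (R.filter (fun y => (n - k*y) ∈ A ∨ y ∈ A)).card
      + (R.filter (fun y => ¬((n - k*y) ∈ A ∨ y ∈ A))).card = R.card :=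
    Finset.card_filter_add_card_filter_not _
  have hneg : weightedRep Aᶜ k n
      = (R.filter (fun y => ¬((n - k*y) ∈ A ∨ y ∈ A))).card := by
    rw [wr_eq Aᶜ k n hk]
    apply congrArg Finset.card
    ext a
    simp only [Finset.mem_filter, Set.mem_compl_iff, not_or]
    exact Iff.rfl
  have hunion : (R.filter (fun y => (n - k*y) ∈ A)).card
      + (R.filter (fun y => y ∈ A)).card
      = (R.filter (fun y => (n - k*y) ∈ A ∨ y ∈ A)).card
        + (R.filter (fun y => (n - k*y) ∈ A ∧ y ∈ A)).card := by
    rw [Finset.filter_or, Finset.filter_and]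
    exact (Finset.card_union_add_card_inter _ _).symm
  have h1 : weightedRep A k n = (R.filter (fun y => (n - k*y) ∈ A ∧ y ∈ A)).card :=
    wr_eq A k n hk
  have hcard : R.card = n/k + 1 := card_range _
  omega

open Finset in
open scoped Classical in
lemma key_step (A : Set ℕ) (k : ℕ) (hk : 2 ≤ k) (N : ℕ)
    (hA : ∀ n, N ≤ n → weightedRep A k n = weightedRep Aᶜ k n)
    (n : ℕ) (hn : N + k ≤ n) : (n ∈ A ↔ ¬ (n/k ∈ A)) := by
  have hk0 : 0 < k := by omega
  have hq1 : 1 ≤ n / k := (Nat.one_le_div_iff hk0).2 (by omega)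
  have hdiv : (n-k)/k + 1 = n/k := by
    have h1 : (n - k) + k = n := by omega
    have := Nat.add_div_right (n - k) hk0
    rw [h1] at this
    omega
  have e1 := count_eq A k n (by omega) (hA n (by omega))
  have e2 := count_eq A k (n-k) (by omega) (hA (n-k) (by omega))
  -- T n = ind(n ∈ A) + T (n-k)
  have hT : ((range (n/k+1)).filter (fun y => (n - k*y) ∈ A)).card
      = (if n ∈ A then 1 else 0)
        + (((range ((n-k)/k+1)).filter (fun y => ((n-k) - k*y) ∈ A)).card) := by
    rw [Finset.card_filter, Finset.card_filter]
    have hsplit := Finset.sum_range_succ' (fun y => if (n - k*y) ∈ A then 1 else 0) (n/k)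
    rw [hsplit]
    have : ∀ i, (if (n - k*(i+1)) ∈ A then 1 else 0)
        = (if ((n-k) - k*i) ∈ A then (1:ℕ) else 0) := by
      intro i
      have hm : k*(i+1) = k*i + k := by ring
      have : n - k*(i+1) = (n-k) - k*i := by omega
      rw [this]
    simp only [this]
    rw [show (n-k)/k + 1 = n/k from hdiv]
    simp [mul_zero, Nat.sub_zero]
    omega
  -- U (n/k) = U ((n-k)/k) + ind(n/k ∈ A)
  have hU : ((range (n/k+1)).filter (fun y => y ∈ A)).card
      = ((range ((n-k)/k+1)).filter (fun y => y ∈ A)).card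
        + (if n/k ∈ A then 1 else 0) := by
    rw [Finset.card_filter, Finset.card_filter]
    have : n/k + 1 = ((n-k)/k + 1) + 1 := by omega
    rw [this, Finset.sum_range_succ]
    congr 1
    rw [hdiv]
  by_cases h1 : n ∈ A <;> by_cases h2 : n/k ∈ A <;> simp [h1, h2] at * <;> omega


lemma block_lemma (A : Set ℕ) (k M : ℕ) (hk : 2 ≤ k)
    (key : ∀ x, M ≤ x → (x ∈ A ↔ ¬ (x/k ∈ A))) :
    ∀ i u b, M ≤ u → b < k^i → (k^i * u + b ∈ A ↔ ((u ∈ A) ↔ Even i)) := by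
  intro i
  induction i with
  | zero =>
    intro u b hu hb
    have hb0 : b = 0 := by simpa using hb
    subst hb0
    simp
  | succ i ih =>
    intro u b hu hb
    have hk0 : 0 < k := by omega
    have hx : M ≤ k^(i+1) * u + b := by
      have h1 : 1 ≤ k^(i+1) := Nat.one_le_pow _ _ hk0
      nlinarith
    have hdiv : (k^(i+1) * u + b) / k = k^i * u + b/k := by
      have : k^(i+1) * u + b = k * (k^i * u) + b := by ring
      rw [this, Nat.mul_add_div hk0]
    have hb' : b / k < k^i := by
      rw [Nat.div_lt_iff_lt_mul hk0]
      calc b < k^(i+1) := hb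
      _ = k^i * k := by ring
    have := key _ hx
    rw [hdiv] at this
    rw [this, ih u (b/k) hu hb', Nat.even_add_one]
    tauto

lemma div_pred (k x : ℕ) (hk : 2 ≤ k) (hx : k ≤ x) :
    (¬ k ∣ x ∧ (x-1)/k = x/k) ∨ (k ∣ x ∧ (x-1)/k = x/k - 1) := by
  have hk0 : 0 < k := by omega
  have hmod := Nat.div_add_mod x k
  have hlt := Nat.mod_lt x hk0
  set q := x / k with hq
  set r := x % k with hr
  have hq1 : 1 ≤ q := (Nat.one_le_div_iff hk0).2 hx
  by_cases h : r = 0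
  · right
    refine ⟨⟨q, by omega⟩, ?_⟩
    have e : (q-1)*k = q*k - 1*k := by rw [Nat.sub_mul]
    have e2 : q*k = k*q := mul_comm q k
    have h2 : x - 1 = (k-1) + (q-1)*k := by omega
    rw [h2, Nat.add_mul_div_right _ _ hk0, Nat.div_eq_of_lt (by omega)]
    omega
  · left
    constructor
    · intro hd
      obtain ⟨t, ht⟩ := hd
      have : x % k = 0 := by rw [ht, Nat.mul_mod_right]
      omega
    · have h2 : x - 1 = (r-1) + k*q := by omega
      rw [h2, Nat.add_mul_div_left _ _ hk0, Nat.div_eq_of_lt (by omega)]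
      omega

lemma change_div (A : Set ℕ) (k M : ℕ) (hk : 2 ≤ k) (hM : 2 ≤ M)
    (key : ∀ x, M ≤ x → (x ∈ A ↔ ¬ (x/k ∈ A))) :
    ∀ j x, k^j * M ≤ x → ¬((x ∈ A) ↔ (x-1 ∈ A)) →
      k^j ∣ x ∧ ¬((x/k^j ∈ A) ↔ (x/k^j - 1 ∈ A)) := by
  intro j
  induction j with
  | zero => intro x _ hch; simpa using hch
  | succ j ih =>
    intro x hx hch
    have hk0 : 0 < k := by omega
    have hkj : k ≤ k^(j+1) := by
      calc k = k^1 := (pow_one k).symm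
      _ ≤ k^(j+1) := Nat.pow_le_pow_right (by omega) (by omega)
    have hkj1 : 1 ≤ k^j := Nat.one_le_pow _ _ hk0
    have hxk : k * M ≤ x := by nlinarith
    have h2M : 2 * M ≤ x := by nlinarith
    have h1 := key x (by omega)
    have h2 := key (x-1) (by omega)
    have hxk2 : k ≤ x := by nlinarith
    have hne : ¬((x/k ∈ A) ↔ ((x-1)/k ∈ A)) := by tauto
    rcases div_pred k x hk (by omega) with ⟨_, heq⟩ | ⟨hdvd, heq⟩
    · rw [heq] at hne; tauto
    · rw [heq] at hne
      have hxdiv : k^j * M ≤ x / k := by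
        apply (Nat.le_div_iff_mul_le hk0).2
        have e : k^j * M * k = k^(j+1) * M := by ring
        omega
      obtain ⟨hd, hch'⟩ := ih (x/k) hxdiv hne
      have hxx : k * (x/k) = x := Nat.mul_div_cancel' hdvd
      constructor
      · obtain ⟨t, ht⟩ := hd
        exact ⟨t, by rw [← hxx, ht]; ring⟩
      · have e : x / k^(j+1) = x / k / k^j := by
          rw [Nat.div_div_eq_div_mul]
          congr 1
          ring
        rw [e]
        exact hch'

lemma exists_change (A : Set ℕ) (k M : ℕ) (hk : 2 ≤ k)
    (key : ∀ x, M ≤ x → (x ∈ A ↔ ¬ (x/k ∈ A))) :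
    ∀ u, M ≤ u → 1 ≤ u → ∃ c, u < c ∧ c ≤ k*u ∧ ¬((c ∈ A) ↔ (c-1 ∈ A)) := by
  intro u hu hu1
  have hk0 : 0 < k := by omega
  have hku : M ≤ k * u := by nlinarith
  have hne : ¬ ((k*u ∈ A) ↔ (u ∈ A)) := by
    have := key (k*u) hku
    rw [Nat.mul_div_cancel_left u hk0] at this
    tauto
  by_contra hcon
  push_neg at hcon
  have hall : ∀ d, u + d ≤ k*u → ((u + d ∈ A) ↔ (u ∈ A)) := by
    intro d
    induction d with
    | zero => intro _; simp
    | succ d ihd =>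
      intro hd
      have h1 := hcon (u + (d+1)) (by omega) (by omega)
      have h2 : u + (d+1) - 1 = u + d := by omega
      rw [h2] at h1
      rw [h1]
      exact ihd (by omega)
  have hu2 : u ≤ k*u := by nlinarith
  have := hall (k*u - u) (by omega)
  rw [show u + (k*u - u) = k*u by omega] at this
  tauto


lemma iff_aux {a b e : Prop} (h : ¬(a ↔ b)) : ¬((a ↔ e) ↔ (b ↔ e)) := by tauto

open Finset in
open scoped Classical in
lemma main_count (A : Set ℕ) (k M u0 : ℕ) (hk : 2 ≤ k) (hM : 2 ≤ M)
    (key : ∀ x, M ≤ x → (x ∈ A ↔ ¬ (x/k ∈ A)))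
    (hu0 : M ≤ u0) (hcu0 : ¬((u0 ∈ A) ↔ (u0+1 ∈ A)))
    (L : ℕ) :
    ∃ Q, ∀ q, Q ≤ q →
      L ≤ ((range (q+1)).filter
            (fun y => y ∈ A ∧ ¬((q - y) ∈ A) ∧ M ≤ y ∧ y + M ≤ q)).card := by
  have hk0 : 0 < k := by omega
  have hk1 : 1 < k := by omega
  set C0 := 4*M*k + 1 with hC0
  set s := L + C0 with hs
  refine ⟨2*k^s*(u0+2) + 4*M, ?_⟩
  intro q hq
  have hHs : ∀ i, i ≤ s → 2*(k^i*(u0+2)) ≤ q := by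
    intro i hi
    have h1 : k^i ≤ k^s := Nat.pow_le_pow_right (by omega) hi
    have h2 : 2*(k^i*(u0+2)) ≤ 2*(k^s*(u0+2)) := by nlinarith
    have h3 : 2*k^s*(u0+2) = 2*(k^s*(u0+2)) := by ring
    omega
  have hq2M : 2*M ≤ q := by omega
  -- choose the scale j for divisibility of change points
  set j := Nat.log k (q/(2*M)) with hj
  have hne0 : q/(2*M) ≠ 0 := by
    have : 1 ≤ q/(2*M) := (Nat.one_le_div_iff (by omega)).2 hq2M
    omega
  have hkj_le : k^j ≤ q/(2*M) := Nat.pow_log_le_self k hne0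
  have hjM : k^j * M ≤ q/2 := by
    have h1 : q/(2*M) = q/2/M := by rw [Nat.div_div_eq_div_mul]
    have h2 : k^j * M ≤ (q/2/M) * M := by
      have := hkj_le
      rw [h1] at this
      exact Nat.mul_le_mul_right _ this
    have h3 : (q/2/M) * M ≤ q/2 := Nat.div_mul_le_self _ _
    omega
  have hjpos : 1 ≤ k^j := Nat.one_le_pow _ _ hk0
  have hMle : M ≤ q/2 := by nlinarith
  have hqlt : q < 2*M*k^(j+1) := by
    have h1 : q/(2*M) < k^(j+1) := Nat.lt_pow_succ_log_self hk1 _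
    have h2 : q < 2*M*(q/(2*M)) + 2*M := by
      have hmod := Nat.div_add_mod q (2*M)
      have := Nat.mod_lt q (show 0 < 2*M by omega)
      omega
    nlinarith
  -- the mismatch sets at each scale
  obtain ⟨T, hT⟩ : ∃ T : ℕ → Set ℕ,
      T = fun i => {y : ℕ | k^i*u0 ≤ y ∧ y < k^i*(u0+2) ∧ ¬((y ∈ A) ↔ ((q - y) ∈ A))} :=
    ⟨_, rfl⟩
  obtain ⟨c, hc⟩ : ∃ c : ℕ → ℕ, c = fun i => q + 1 - k^i*(u0+1) := ⟨_, rfl⟩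
  -- scales whose mismatch set is empty produce change points divisible by k^j
  have claim1 : ∀ i, i ≤ s → ¬ (T i).Nonempty →
      (k^j ∣ c i ∧ k^i*(u0+1) ≤ q ∧ q/2 ≤ c i ∧ c i ≤ q) := by
    intro i hi hGi
    have hall : ∀ y, k^i*u0 ≤ y → y < k^i*(u0+2) → ((y ∈ A) ↔ ((q - y) ∈ A)) := by
      intro y h1 h2
      by_contra hcon
      refine hGi ⟨y, ?_⟩
      rw [hT]
      exact ⟨h1, h2, hcon⟩
    have hki : 1 ≤ k^i := Nat.one_le_pow _ _ hk0
    have hHi := hHs i hi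
    have e1 : k^i*(u0+2) = k^i*(u0+1) + k^i := by ring
    have e2 : k^i*(u0+1) = k^i*u0 + k^i := by ring
    obtain ⟨y1, hy1⟩ : ∃ y1, y1 = k^i*u0 + (k^i - 1) := ⟨_, rfl⟩
    obtain ⟨y2, hy2⟩ : ∃ y2, y2 = k^i*(u0+1) := ⟨_, rfl⟩
    have hci : c i = q + 1 - k^i*(u0+1) := by rw [hc]
    have hy2e : y2 = y1 + 1 := by
      have : k^i*(u0+1) = k^i*u0 + k^i := by ring
      omega
    have hb1 : (y1 ∈ A) ↔ ((u0 ∈ A) ↔ Even i) := by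
      rw [hy1]
      exact block_lemma A k M hk key i u0 (k^i - 1) hu0 (by omega)
    have hb2 : (y2 ∈ A) ↔ (((u0+1) ∈ A) ↔ Even i) := by
      rw [hy2]
      have := block_lemma A k M hk key i (u0+1) 0 (by omega) (by omega)
      rw [Nat.add_zero] at this
      exact this
    have hy1r : y1 < k^i*(u0+2) := by
      have : k^i*(u0+2) = k^i*u0 + k^i + k^i := by ring
      omega
    have hy2r : y2 < k^i*(u0+2) := by
      have : k^i*(u0+2) = k^i*(u0+1) + k^i := by ring
      omega
    have h1 := hall y1 (by omega) hy1r
    have h2 := hall y2 (by omega) hy2r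
    have hy2q : y2 ≤ q := by omega
    have hcy : c i = q - y1 := by omega
    have hcy' : c i - 1 = q - y2 := by omega
    have hne12 : ¬((y1 ∈ A) ↔ (y2 ∈ A)) := by
      rw [hb1, hb2]
      exact iff_aux hcu0
    have hchange : ¬((c i ∈ A) ↔ (c i - 1 ∈ A)) := by
      rw [hcy', hcy]
      intro hiff
      exact hne12 ((h1.trans hiff).trans h2.symm)
    have hclow : q/2 ≤ c i := by omega
    have hdvd : k^j ∣ c i := by
      have := change_div A k M hk hM key j (c i) (by omega) hchange
      exact this.1
    exact ⟨hdvd, by omega, hclow, by omega⟩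
  -- at most C0 scales are bad
  have hbadcard : ((range (s+1)).filter (fun i => ¬ (T i).Nonempty)).card ≤ C0 := by
    have hcard : ((range (s+1)).filter (fun i => ¬ (T i).Nonempty)).card
        ≤ (range C0).card := by
      apply Finset.card_le_card_of_injOn (fun i => c i / k^j)
      · intro i hi
        simp only [Finset.mem_coe, mem_filter, mem_range] at hi
        obtain ⟨hdvd, _, _, hcq⟩ := claim1 i (by omega) hi.2
        simp only [Finset.mem_coe, mem_range, hC0]
        have hmul : (c i / k^j) * k^j = c i := Nat.div_mul_cancel hdvd
        have h1 : (c i / k^j) * k^j < 2*M*k^(j+1) := by omega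
        have h2 : (2*M*k)*k^j = 2*M*k^(j+1) := by ring
        have h3 : c i / k^j < 2*M*k := by
          refine lt_of_mul_lt_mul_right ?_ (Nat.zero_le (k^j))
          omega
        have h4 : 2*M*k*2 = 4*M*k := by ring
        have h5 : 1 ≤ 2*M*k := by nlinarith
        omega
      · intro i hi i' hi' heq
        simp only [Finset.mem_coe, mem_filter, mem_range] at hi hi'
        have heq' : c i / k^j = c i' / k^j := heq
        obtain ⟨hd1, hle1, _, _⟩ := claim1 i (by omega) hi.2
        obtain ⟨hd2, hle2, _, _⟩ := claim1 i' (by omega) hi'.2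
        have e1 : (c i / k^j) * k^j = c i := Nat.div_mul_cancel hd1
        have e2 : (c i' / k^j) * k^j = c i' := Nat.div_mul_cancel hd2
        have hcc : c i = c i' := by rw [← e1, ← e2, heq']
        have hmm : k^i*(u0+1) = k^(i')*(u0+1) := by
          have b1 : c i = q + 1 - k^i*(u0+1) := by rw [hc]
          have b2 : c i' = q + 1 - k^(i')*(u0+1) := by rw [hc]
          omega
        have hpow : k^i = k^(i') := by
          have h3 : 0 < u0 + 1 := by omega
          exact Nat.eq_of_mul_eq_mul_right h3 hmm
        exact Nat.pow_right_injective hk hpow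
    simpa using hcard
  
  -- good scales are plentiful
  have hgoodcard : L + 1 ≤ ((range (s+1)).filter (fun i => (T i).Nonempty)).card := by
    have htot := Finset.card_filter_add_card_filter_not
      (s := range (s+1)) (p := fun i => (T i).Nonempty)
    rw [card_range] at htot
    omega
  -- choice of witnesses
  obtain ⟨f, hf⟩ : ∃ f : ℕ → ℕ, ∀ i, (T i).Nonempty → f i ∈ T i := by
    refine ⟨fun i => if h : (T i).Nonempty then h.choose else 0, fun i h => ?_⟩
    simp only [dif_pos h]
    exact h.choose_spec
  obtain ⟨z, hz⟩ : ∃ z : ℕ → ℕ, z = fun i => if f i ∈ A then f i else q - f i := ⟨_, rfl⟩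
  have hfacts : ∀ i, i ≤ s → (T i).Nonempty →
      k^i*u0 ≤ f i ∧ f i < k^i*(u0+2) ∧ ¬((f i ∈ A) ↔ ((q - f i) ∈ A))
        ∧ 2*(f i) < q ∧ u0 ≤ f i := by
    intro i his hTi
    have hfi := hf i hTi
    rw [hT] at hfi
    simp only [Set.mem_setOf_eq] at hfi
    obtain ⟨hlo, hhi, hne⟩ := hfi
    have hHi := hHs i his
    have hu0y : u0 ≤ k^i*u0 := Nat.le_mul_of_pos_left u0 (pow_pos hk0 i)
    exact ⟨hlo, hhi, hne, by omega, by omega⟩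
  -- the images land in the target set and are distinct
  have hmem : ∀ i ∈ (range (s+1)).filter (fun i => (T i).Nonempty),
      z i ∈ (range (q+1)).filter
        (fun y => y ∈ A ∧ ¬((q - y) ∈ A) ∧ M ≤ y ∧ y + M ≤ q) := by
    intro i hi
    simp only [mem_filter, mem_range] at hi
    obtain ⟨hlo, hhi, hne, h2y, hu0y⟩ := hfacts i (by omega) hi.2
    simp only [mem_filter, mem_range]
    rw [hz]
    simp only
    by_cases hA : f i ∈ A
    · rw [if_pos hA]
      exact ⟨by omega, hA, by tauto, by omega, by omega⟩
    · rw [if_neg hA]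
      have hqA : (q - f i) ∈ A := by tauto
      have heq2 : q - (q - f i) = f i := by omega
      exact ⟨by omega, hqA, by rw [heq2]; exact hA, by omega, by omega⟩
  have hzne : ∀ i i', i ≤ s → i' ≤ s → (T i).Nonempty → (T i').Nonempty →
      i < i' → z i ≠ z i' := by
    intro i i' his his' hTi hTi' hlt
    obtain ⟨hlo, hhi, hne, h2y, hu0y⟩ := hfacts i his hTi
    obtain ⟨hlo', hhi', hne', h2y', hu0y'⟩ := hfacts i' his' hTi'
    have hHi := hHs i his
    have hHi' := hHs i' his'
    have g1 : k^i*(u0+2) ≤ k^(i')*u0 := by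
      have t0 : 2*u0 ≤ k*u0 := Nat.mul_le_mul (by omega) le_rfl
      have t1 : u0+2 ≤ k*u0 := by omega
      have t2 : k^i*(u0+2) ≤ k^i*(k*u0) := Nat.mul_le_mul le_rfl t1
      have t3 : k^i*(k*u0) = k^(i+1)*u0 := by ring
      have t4 : k^(i+1) ≤ k^(i') := Nat.pow_le_pow_right (by omega) (by omega)
      have t5 : k^(i+1)*u0 ≤ k^(i')*u0 := Nat.mul_le_mul t4 le_rfl
      omega
    rw [hz]
    simp only
    by_cases hA1 : f i ∈ A <;> by_cases hA2 : f i' ∈ A <;>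
      simp only [if_pos, if_neg, hA1, hA2, if_true, if_false, ite_true, ite_false] <;>
      omega
  have hinj : Set.InjOn z ((range (s+1)).filter (fun i => (T i).Nonempty)) := by
    intro i hi i' hi' heq
    simp only [Finset.mem_coe, mem_filter, mem_range] at hi hi'
    rcases lt_trichotomy i i' with h | h | h
    · exact absurd heq (hzne i i' (by omega) (by omega) hi.2 hi'.2 h)
    · exact h
    · exact absurd heq.symm (hzne i' i (by omega) (by omega) hi'.2 hi.2 h)
  calc L ≤ L + 1 := by omega
  _ ≤ ((range (s+1)).filter (fun i => (T i).Nonempty)).card := hgoodcard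
  _ ≤ _ := Finset.card_le_card_of_injOn z hmem hinj


theorem stmt_3 (k : ℕ) (hk : 2 ≤ k) (A : Set ℕ)
    (hA : ∀ᶠ n in Filter.atTop, weightedRep A k n = weightedRep Aᶜ k n) :
    Filter.Tendsto (fun n : ℕ => weightedRep A k n) Filter.atTop Filter.atTop := by
  obtain ⟨N, hN⟩ := Filter.eventually_atTop.1 hA
  set M := N + k + 2 with hM
  have hM2 : 2 ≤ M := by omega
  have key : ∀ x, M ≤ x → (x ∈ A ↔ ¬ (x/k ∈ A)) := by
    intro x hx
    exact key_step A k hk N (fun n hn => hN n hn) x (by omega)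
  obtain ⟨c0, hc0M, hc0le, hc0ch⟩ := exists_change A k M hk key M le_rfl (by omega)
  set u0 := c0 - 1 with hu0def
  have hu0 : M ≤ u0 := by omega
  have hcu0 : ¬((u0 ∈ A) ↔ (u0+1 ∈ A)) := by
    have h1 : u0 + 1 = c0 := by omega
    have h2 : u0 = c0 - 1 := rfl
    rw [h1, h2]
    intro h
    exact hc0ch h.symm
  rw [Filter.tendsto_atTop]
  intro L
  obtain ⟨Q, hQ⟩ := main_count A k M u0 hk hM2 key hu0 hcu0 L
  rw [Filter.eventually_atTop]
  refine ⟨k*(Q+1), ?_⟩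
  intro n hn
  have hk0 : 0 < k := by omega
  have hqQ : Q ≤ n/k := by
    have h1 : (k*(Q+1))/k ≤ n/k := Nat.div_le_div_right hn
    rw [Nat.mul_div_cancel_left _ hk0] at h1
    omega
  have hE := hQ (n/k) hqQ
  rw [wr_eq A k n (by omega)]
  refine le_trans hE (Finset.card_le_card ?_)
  intro y hy
  simp only [Finset.mem_filter, Finset.mem_range] at hy ⊢
  obtain ⟨hyr, hyA, hqyA, hMy, hyMq⟩ := hy
  refine ⟨hyr, ?_, hyA⟩
  -- n - k*y = k*(n/k - y) + n % k and the block lemma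
  obtain ⟨d, hd⟩ : ∃ d, n/k = y + d := ⟨n/k - y, by omega⟩
  have hmod := Nat.div_add_mod n k
  have hmlt : n % k < k := Nat.mod_lt _ hk0
  have hdist : k*(n/k) = k*y + k*d := by rw [hd]; ring
  have hsub : n - k*y = k*d + n % k := by omega
  have hblock := block_lemma A k M hk key 1 d (n % k) (by omega) (by rwa [pow_one])
  rw [pow_one] at hblock
  rw [hsub, hblock]
  have hdnA : ¬ (d ∈ A) := by
    have : n/k - y = d := by omega
    rwa [this] at hqyA
  simp [Nat.not_even_one]
  intro h
  exact absurd h hdnA
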